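/- Let b₁, b₆, b₇ ∈ ℝ. Define k : ℝ → ℝ by k(s) = 4·e^{-2(b₇+s)}/((b₆ + e^{-2(b₇+s)})² + 4 + 4b₁²). Then k is positive, non-constant, and satisfies (3/4)·k'(s)² − (1/2)·k(s)·k''(s) − (1 + b₁²)·k(s)⁴ − k(s)² = 0 for every s ∈ ℝ. -/

import Mathlib

noncomputable def F1aux (b₁ b₆ b₇ : ℝ) : ℝ → ℝ := fun s =>
  (-8 * Real.exp (-2 * (b₇ + s)) * ((b₆ + Real.exp (-2 * (b₇ + s))) ^ 2 + 4 + 4 * b₁ ^ 2)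
    + 16 * Real.exp (-2 * (b₇ + s)) ^ 2 * (b₆ + Real.exp (-2 * (b₇ + s))))
  / ((b₆ + Real.exp (-2 * (b₇ + s))) ^ 2 + 4 + 4 * b₁ ^ 2) ^ 2

noncomputable def F2aux (b₁ b₆ b₇ : ℝ) : ℝ → ℝ := fun s =>
  ((16 * Real.exp (-2 * (b₇ + s)) * ((b₆ + Real.exp (-2 * (b₇ + s))) ^ 2 + 4 + 4 * b₁ ^ 2)
      - 32 * Real.exp (-2 * (b₇ + s)) ^ 2 * (b₆ + Real.exp (-2 * (b₇ + s)))
      - 32 * Real.exp (-2 * (b₇ + s)) ^ 3)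
      * ((b₆ + Real.exp (-2 * (b₇ + s))) ^ 2 + 4 + 4 * b₁ ^ 2)
    + 8 * Real.exp (-2 * (b₇ + s)) * (b₆ + Real.exp (-2 * (b₇ + s)))
      * (-8 * Real.exp (-2 * (b₇ + s)) * ((b₆ + Real.exp (-2 * (b₇ + s))) ^ 2 + 4 + 4 * b₁ ^ 2)
        + 16 * Real.exp (-2 * (b₇ + s)) ^ 2 * (b₆ + Real.exp (-2 * (b₇ + s)))))
  / ((b₆ + Real.exp (-2 * (b₇ + s))) ^ 2 + 4 + 4 * b₁ ^ 2) ^ 3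

/-- In `H³` (K = −1): `k(s) = 4e^{−2(b₇+s)}/((b₆ + e^{−2(b₇+s)})² + 4 + 4b₁²)` is positive,
non-constant and satisfies `(3/4)k'² − (1/2)k k'' − (1+b₁²)k⁴ − k² = 0`. -/
theorem stmt_13 (b₁ b₆ b₇ : ℝ)
    (k : ℝ → ℝ)
    (hk : k = fun s => 4 * Real.exp (-2 * (b₇ + s)) /
      ((b₆ + Real.exp (-2 * (b₇ + s))) ^ 2 + 4 + 4 * b₁ ^ 2)) :
    (∀ s, 0 < k s) ∧ (∃ s t : ℝ, k s ≠ k t) ∧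
      ∀ s, 3 / 4 * (deriv k s) ^ 2 - 1 / 2 * k s * deriv (deriv k) s
        - (1 + b₁ ^ 2) * (k s) ^ 4 - (k s) ^ 2 = 0 := by
  subst hk
  have hDpos : ∀ s : ℝ, (0:ℝ) < (b₆ + Real.exp (-2 * (b₇ + s))) ^ 2 + 4 + 4 * b₁ ^ 2 := by
    intro s; positivity
  have hE' : ∀ s : ℝ, HasDerivAt (fun s => Real.exp (-2 * (b₇ + s)))
      (-2 * Real.exp (-2 * (b₇ + s))) s := by
    intro s
    have h : HasDerivAt (fun s : ℝ => -2 * (b₇ + s)) (-2) s := by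
      simpa using ((hasDerivAt_id s).const_add b₇).const_mul (-2)
    simpa [mul_comm] using h.exp
  have hD' : ∀ s : ℝ, HasDerivAt
      (fun s => (b₆ + Real.exp (-2 * (b₇ + s))) ^ 2 + 4 + 4 * b₁ ^ 2)
      (-4 * Real.exp (-2 * (b₇ + s)) * (b₆ + Real.exp (-2 * (b₇ + s)))) s := by
    intro s
    have := ((((hE' s).const_add b₆).pow 2).add_const 4).add_const (4 * b₁ ^ 2)
    refine this.congr_deriv ?_
    ring
  have hk' : ∀ s : ℝ, HasDerivAt (fun s => 4 * Real.exp (-2 * (b₇ + s)) /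
      ((b₆ + Real.exp (-2 * (b₇ + s))) ^ 2 + 4 + 4 * b₁ ^ 2)) (F1aux b₁ b₆ b₇ s) s := by
    intro s
    have := ((hE' s).const_mul 4).div (hD' s) (hDpos s).ne'
    refine this.congr_deriv ?_
    rw [F1aux]
    ring
  have hd1 : deriv (fun s => 4 * Real.exp (-2 * (b₇ + s)) /
      ((b₆ + Real.exp (-2 * (b₇ + s))) ^ 2 + 4 + 4 * b₁ ^ 2)) = F1aux b₁ b₆ b₇ :=
    funext fun s => (hk' s).deriv
  have hF1' : ∀ s : ℝ, HasDerivAt (F1aux b₁ b₆ b₇) (F2aux b₁ b₆ b₇ s) s := by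
    intro s
    have hP : HasDerivAt (fun s =>
        -8 * Real.exp (-2 * (b₇ + s)) * ((b₆ + Real.exp (-2 * (b₇ + s))) ^ 2 + 4 + 4 * b₁ ^ 2)
          + 16 * Real.exp (-2 * (b₇ + s)) ^ 2 * (b₆ + Real.exp (-2 * (b₇ + s))))
        (((-8 * (-2 * Real.exp (-2 * (b₇ + s)))) *
            ((b₆ + Real.exp (-2 * (b₇ + s))) ^ 2 + 4 + 4 * b₁ ^ 2)
          + (-8 * Real.exp (-2 * (b₇ + s))) *
            (-4 * Real.exp (-2 * (b₇ + s)) * (b₆ + Real.exp (-2 * (b₇ + s)))))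
          + ((16 * (2 * Real.exp (-2 * (b₇ + s)) ^ 1 * (-2 * Real.exp (-2 * (b₇ + s))))) *
              (b₆ + Real.exp (-2 * (b₇ + s)))
            + (16 * Real.exp (-2 * (b₇ + s)) ^ 2) * (-2 * Real.exp (-2 * (b₇ + s))))) s := by
      exact (((hE' s).const_mul (-8)).mul (hD' s)).add
        ((((hE' s).pow 2).const_mul 16).mul ((hE' s).const_add b₆))
    have hQ : HasDerivAt (fun s =>
        ((b₆ + Real.exp (-2 * (b₇ + s))) ^ 2 + 4 + 4 * b₁ ^ 2) ^ 2)
        (2 * ((b₆ + Real.exp (-2 * (b₇ + s))) ^ 2 + 4 + 4 * b₁ ^ 2) ^ 1 *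
          (-4 * Real.exp (-2 * (b₇ + s)) * (b₆ + Real.exp (-2 * (b₇ + s))))) s := (hD' s).pow 2
    have hQne : ((b₆ + Real.exp (-2 * (b₇ + s))) ^ 2 + 4 + 4 * b₁ ^ 2) ^ 2 ≠ 0 := by
      positivity
    have := hP.div hQ hQne
    refine this.congr_deriv ?_
    rw [F2aux]
    have hD0 : ((b₆ + Real.exp (-2 * (b₇ + s))) ^ 2 + 4 + 4 * b₁ ^ 2) ≠ 0 := (hDpos s).ne'
    field_simp
    ring
  have hd2 : deriv (F1aux b₁ b₆ b₇) = F2aux b₁ b₆ b₇ := funext fun s => (hF1' s).deriv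
  refine ⟨fun s => by positivity, ?_, ?_⟩
  · refine ⟨-b₇, -b₇ - Real.log 2 / 2, fun h => ?_⟩
    have e1 : Real.exp (-2 * (b₇ + -b₇)) = 1 := by norm_num
    have e2 : Real.exp (-2 * (b₇ + (-b₇ - Real.log 2 / 2))) = 2 := by
      rw [show -2 * (b₇ + (-b₇ - Real.log 2 / 2)) = Real.log 2 by ring, Real.exp_log]
      norm_num
    simp only [e1, e2] at h
    rw [div_eq_div_iff (by positivity) (by positivity)] at h
    nlinarith [sq_nonneg b₆, sq_nonneg b₁]
  · intro s
    rw [hd1, hd2, F1aux, F2aux]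
    have hD0 : ((b₆ + Real.exp (-2 * (b₇ + s))) ^ 2 + 4 + 4 * b₁ ^ 2) ≠ 0 := (hDpos s).ne'
    field_simp
    ring
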